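/- Let P ∈ {0,1}^d have i.i.d. Bernoulli(τ) coordinates, independent of (X,Y), with τ ∈ (0,1], and assume diag(Σ) = I_d. Then for every θ ∈ ℝ^d, E[(Y − (P ⊙ X)^⊤θ)²] = E[(Y − X^⊤(τθ))²] + τ(1−τ)‖θ‖₂², where the expectation on the left is over both P and (X,Y). -/

import Mathlib

open MeasureTheory ProbabilityTheory Matrix

lemma l2mul {Ω : Type*} [MeasurableSpace Ω] {μ : Measure Ω} {f g : Ω → ℝ}
    (hf : MemLp f 2 μ) (hg : MemLp g 2 μ) :
    Integrable (fun ω => f ω * g ω) μ := by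
  have h : MemLp (fun ω => f ω * g ω) 1 μ := hg.smul hf
  exact memLp_one_iff_integrable.mp (by simpa [smul_eq_mul] using h)

lemma expand_sq {Ω : Type*} [MeasurableSpace Ω] {μ : Measure Ω} {d : ℕ}
    (Y : Ω → ℝ) (W : Fin d → Ω → ℝ)
    (hYsq : Integrable (fun ω => Y ω ^ 2) μ)
    (hYW : ∀ j, Integrable (fun ω => Y ω * W j ω) μ)
    (hWW : ∀ j l, Integrable (fun ω => W j ω * W l ω) μ) :
    ∫ ω, (Y ω - ∑ j, W j ω) ^ 2 ∂μ
      = (∫ ω, Y ω ^ 2 ∂μ) - 2 * ∑ j, (∫ ω, Y ω * W j ω ∂μ)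
        + ∑ j, ∑ l, (∫ ω, W j ω * W l ω ∂μ) := by
  have h1 : (fun ω => (Y ω - ∑ j, W j ω) ^ 2)
      = fun ω => Y ω ^ 2 + (((∑ j, (-2) * (Y ω * W j ω))) + ∑ j, ∑ l, W j ω * W l ω) := by
    funext ω
    have hs : (∑ j, W j ω) * (∑ l, W l ω) = ∑ j, ∑ l, W j ω * W l ω :=
      Finset.sum_mul_sum _ _ _ _
    have hm : Y ω * (∑ j, W j ω) = ∑ j, Y ω * W j ω := Finset.mul_sum _ _ _
    have hm2 : (∑ j, (-2 : ℝ) * (Y ω * W j ω)) = -2 * ∑ j, Y ω * W j ω :=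
      (Finset.mul_sum _ _ _).symm
    rw [hm2, ← hs, ← hm]; ring
  have hints : Integrable (fun ω => ∑ j, (-2 : ℝ) * (Y ω * W j ω)) μ :=
    integrable_finset_sum _ fun j _ => ((hYW j).const_mul _)
  have hintss : Integrable (fun ω => ∑ j, ∑ l, W j ω * W l ω) μ :=
    integrable_finset_sum _ fun j _ => integrable_finset_sum _ fun l _ => hWW j l
  have hadd : Integrable (fun ω => (∑ j, (-2:ℝ) * (Y ω * W j ω)) + ∑ j, ∑ l, W j ω * W l ω) μ :=
    hints.add hintss
  rw [h1, integral_add hYsq hadd, integral_add hints hintss,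
    integral_finset_sum _ fun j _ => ((hYW j).const_mul _),
    integral_finset_sum _ fun j _ => integrable_finset_sum _ fun l _ => hWW j l]
  have : ∀ j : Fin d, ∫ ω, (-2 : ℝ) * (Y ω * W j ω) ∂μ = -2 * ∫ ω, Y ω * W j ω ∂μ :=
    fun j => MeasureTheory.integral_const_mul _ _
  rw [Finset.sum_congr rfl fun j _ => this j,
    Finset.sum_congr rfl fun (j : Fin d) _ =>
      integral_finset_sum (μ := μ) Finset.univ fun l _ => hWW j l, ← Finset.mul_sum]
  ring

/-- for an i.i.d. Bernoulli(τ) mask `P` independent of `(X,Y)` and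
normalized features (`diag(Σ) = I`), for every `θ`:
`E[(Y − (P⊙X)⊤θ)²] = E[(Y − X⊤(τθ))²] + τ(1−τ)‖θ‖₂²`. -/
theorem stmt18
    {Ω : Type*} [MeasurableSpace Ω] (μ : Measure Ω) [IsProbabilityMeasure μ]
    {d : ℕ}
    (X : Ω → Fin d → ℝ) (Y : Ω → ℝ)
    (hXmeas : ∀ j, Measurable fun ω => X ω j) (hYmeas : Measurable Y)
    (hX2 : ∀ j, MemLp (fun ω => X ω j) 2 μ) (hY2 : MemLp Y 2 μ)
    (Sig : Matrix (Fin d) (Fin d) ℝ)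
    (hSig : ∀ l j, Sig l j = ∫ ω, X ω l * X ω j ∂μ)
    (hdiag : ∀ j, Sig j j = 1)
    (τ : ℝ) (hτ0 : 0 < τ) (hτ1 : τ ≤ 1)
    -- the Bernoulli(τ) mask with i.i.d. coordinates, independent of (X,Y)
    (P : Ω → Fin d → ℝ)
    (hPmeas : ∀ j, Measurable fun ω => P ω j)
    (hP01 : ∀ j, ∀ᵐ ω ∂μ, P ω j = 0 ∨ P ω j = 1)
    (hPber : ∀ j, μ {ω | P ω j = 1} = ENNReal.ofReal τ)
    (hPiid : iIndepFun (fun j ω => P ω j) μ)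
    (hPindep : IndepFun (fun ω => P ω) (fun ω => (X ω, Y ω)) μ) :
    ∀ θ : Fin d → ℝ,
      ∫ ω, (Y ω - ∑ j, P ω j * X ω j * θ j) ^ 2 ∂μ
        = (∫ ω, (Y ω - ∑ j, τ * θ j * X ω j) ^ 2 ∂μ)
          + τ * (1 - τ) * ∑ j, θ j ^ 2 := by
  intro θ
  -- a.e. bound on P
  have hPbd : ∀ j, ∀ᵐ ω ∂μ, ‖P ω j‖ ≤ 1 := by
    intro j
    filter_upwards [hP01 j] with ω h
    rcases h with h | h <;> simp [h]
  have hPPbd : ∀ j l, ∀ᵐ ω ∂μ, ‖P ω j * P ω l‖ ≤ 1 := by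
    intro j l
    filter_upwards [hP01 j, hP01 l] with ω h1 h2
    rcases h1 with h1 | h1 <;> rcases h2 with h2 | h2 <;> simp [h1, h2]
  -- E[P_j] = τ
  have hEP : ∀ j, ∫ ω, P ω j ∂μ = τ := by
    intro j
    have hs : MeasurableSet {ω | P ω j = 1} := (hPmeas j) (measurableSet_singleton 1)
    have he : (fun ω => P ω j) =ᵐ[μ] Set.indicator {ω | P ω j = 1} (1 : Ω → ℝ) := by
      filter_upwards [hP01 j] with ω h
      rcases h with h | h <;> simp [Set.indicator, Set.mem_setOf_eq, h]
    rw [integral_congr_ae he, integral_indicator_one hs, measureReal_def, hPber j,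
      ENNReal.toReal_ofReal hτ0.le]
  -- E[P_j P_l]
  have hEPP : ∀ j l, ∫ ω, P ω j * P ω l ∂μ = if j = l then τ else τ ^ 2 := by
    intro j l
    by_cases h : j = l
    · subst h
      rw [if_pos rfl]
      have he : (fun ω => P ω j * P ω j) =ᵐ[μ] fun ω => P ω j := by
        filter_upwards [hP01 j] with ω h
        rcases h with h | h <;> simp [h]
      rw [integral_congr_ae he, hEP]
    · rw [if_neg h]
      have hi : IndepFun (fun ω => P ω j) (fun ω => P ω l) μ := hPiid.indepFun h
      have h2 := hi.integral_mul_eq_mul_integral (hPmeas j).aestronglyMeasurable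
        (hPmeas l).aestronglyMeasurable
      calc ∫ ω, P ω j * P ω l ∂μ = (∫ ω, P ω j ∂μ) * ∫ ω, P ω l ∂μ := h2
        _ = τ ^ 2 := by rw [hEP, hEP]; ring
  -- independence of P-coordinates from (X,Y)-functionals
  have hindYX : ∀ j, ∫ ω, P ω j * (Y ω * X ω j) ∂μ = τ * ∫ ω, Y ω * X ω j ∂μ := by
    intro j
    have hφ : Measurable fun p : Fin d → ℝ => p j := measurable_pi_apply j
    have hψ : Measurable fun z : (Fin d → ℝ) × ℝ => z.2 * z.1 j :=
      measurable_snd.mul ((measurable_pi_apply j).comp measurable_fst)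
    have hi := hPindep.comp hφ hψ
    have h2 := hi.integral_mul_eq_mul_integral (hPmeas j).aestronglyMeasurable
      (hYmeas.mul (hXmeas j)).aestronglyMeasurable
    calc ∫ ω, P ω j * (Y ω * X ω j) ∂μ
        = (∫ ω, P ω j ∂μ) * ∫ ω, Y ω * X ω j ∂μ := h2
      _ = τ * ∫ ω, Y ω * X ω j ∂μ := by rw [hEP]
  have hindXX : ∀ j l, ∫ ω, (P ω j * P ω l) * (X ω j * X ω l) ∂μ
      = (if j = l then τ else τ ^ 2) * ∫ ω, X ω j * X ω l ∂μ := by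
    intro j l
    have hφ : Measurable fun p : Fin d → ℝ => p j * p l :=
      (measurable_pi_apply j).mul (measurable_pi_apply l)
    have hψ : Measurable fun z : (Fin d → ℝ) × ℝ => z.1 j * z.1 l :=
      ((measurable_pi_apply j).comp measurable_fst).mul
        ((measurable_pi_apply l).comp measurable_fst)
    have hi := hPindep.comp hφ hψ
    have h2 := hi.integral_mul_eq_mul_integral ((hPmeas j).mul (hPmeas l)).aestronglyMeasurable
      ((hXmeas j).mul (hXmeas l)).aestronglyMeasurable
    calc ∫ ω, (P ω j * P ω l) * (X ω j * X ω l) ∂μ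
        = (∫ ω, P ω j * P ω l ∂μ) * ∫ ω, X ω j * X ω l ∂μ := h2
      _ = _ := by rw [hEPP]
  -- integrability
  have hYsq : Integrable (fun ω => Y ω ^ 2) μ := by
    simpa [pow_two] using l2mul hY2 hY2
  have hYX : ∀ j, Integrable (fun ω => Y ω * X ω j) μ := fun j => l2mul hY2 (hX2 j)
  have hXX : ∀ j l, Integrable (fun ω => X ω j * X ω l) μ := fun j l => l2mul (hX2 j) (hX2 l)
  have hYW1 : ∀ j, Integrable (fun ω => Y ω * (P ω j * X ω j * θ j)) μ := by
    intro j
    have h := ((hYX j).bdd_mul (hPmeas j).aestronglyMeasurable (hPbd j)).mul_const (θ j)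
    exact h.congr (ae_of_all _ fun ω => by ring)
  have hW1W1 : ∀ j l, Integrable
      (fun ω => (P ω j * X ω j * θ j) * (P ω l * X ω l * θ l)) μ := by
    intro j l
    have h := (((hXX j l).bdd_mul
      ((hPmeas j).mul (hPmeas l)).aestronglyMeasurable (hPPbd j l)).mul_const (θ j * θ l))
    exact h.congr (ae_of_all _ fun ω => by simp only [Pi.mul_apply]; ring)
  have hYW2 : ∀ j, Integrable (fun ω => Y ω * (τ * θ j * X ω j)) μ := by
    intro j
    exact ((hYX j).const_mul (τ * θ j)).congr (ae_of_all _ fun ω => by ring)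
  have hW2W2 : ∀ j l, Integrable (fun ω => (τ * θ j * X ω j) * (τ * θ l * X ω l)) μ := by
    intro j l
    exact ((hXX j l).const_mul (τ * θ j * (τ * θ l))).congr (ae_of_all _ fun ω => by ring)
  -- values
  have hv1 : ∀ j, ∫ ω, Y ω * (P ω j * X ω j * θ j) ∂μ
      = τ * θ j * ∫ ω, Y ω * X ω j ∂μ := by
    intro j
    have e : (fun ω => Y ω * (P ω j * X ω j * θ j))
        =ᵐ[μ] fun ω => (P ω j * (Y ω * X ω j)) * θ j := ae_of_all _ fun ω => by ring
    rw [integral_congr_ae e, integral_mul_const, hindYX j]; ring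
  have hv2 : ∀ j l, ∫ ω, (P ω j * X ω j * θ j) * (P ω l * X ω l * θ l) ∂μ
      = (if j = l then τ else τ ^ 2) * Sig j l * (θ j * θ l) := by
    intro j l
    have e : (fun ω => (P ω j * X ω j * θ j) * (P ω l * X ω l * θ l))
        =ᵐ[μ] fun ω => ((P ω j * P ω l) * (X ω j * X ω l)) * (θ j * θ l) :=
      ae_of_all _ fun ω => by ring
    rw [integral_congr_ae e, integral_mul_const, hindXX j l, hSig j l] <;> ring
  have hv3 : ∀ j, ∫ ω, Y ω * (τ * θ j * X ω j) ∂μ = τ * θ j * ∫ ω, Y ω * X ω j ∂μ := by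
    intro j
    have e : (fun ω => Y ω * (τ * θ j * X ω j))
        =ᵐ[μ] fun ω => (τ * θ j) * (Y ω * X ω j) := ae_of_all _ fun ω => by ring
    rw [integral_congr_ae e, integral_const_mul]
  have hv4 : ∀ j l, ∫ ω, (τ * θ j * X ω j) * (τ * θ l * X ω l) ∂μ
      = τ ^ 2 * Sig j l * (θ j * θ l) := by
    intro j l
    have e : (fun ω => (τ * θ j * X ω j) * (τ * θ l * X ω l))
        =ᵐ[μ] fun ω => (τ * θ j * (τ * θ l)) * (X ω j * X ω l) := ae_of_all _ fun ω => by ring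
    rw [integral_congr_ae e, integral_const_mul, hSig j l] <;> ring
  -- expansions
  have e1 := expand_sq (μ := μ) Y (fun j ω => P ω j * X ω j * θ j) hYsq hYW1 hW1W1
  have e2 := expand_sq (μ := μ) Y (fun j ω => τ * θ j * X ω j) hYsq hYW2 hW2W2
  rw [e1, e2,
    Finset.sum_congr rfl fun j _ => hv1 j,
    Finset.sum_congr rfl fun j _ => hv3 j,
    Finset.sum_congr rfl fun (j : Fin d) _ => Finset.sum_congr rfl fun l _ => hv2 j l,
    Finset.sum_congr rfl fun (j : Fin d) _ => Finset.sum_congr rfl fun l _ => hv4 j l]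
  -- final algebra
  have hfin : ∑ j, ∑ l, (if j = l then τ else τ ^ 2) * Sig j l * (θ j * θ l)
      = (∑ j, ∑ l, τ ^ 2 * Sig j l * (θ j * θ l)) + τ * (1 - τ) * ∑ j, θ j ^ 2 := by
    have hj : ∀ j : Fin d, ∑ l, (if j = l then τ else τ ^ 2) * Sig j l * (θ j * θ l)
        = (∑ l, τ ^ 2 * Sig j l * (θ j * θ l)) + (τ - τ ^ 2) * θ j ^ 2 := by
      intro j
      have hterm : ∀ l : Fin d, (if j = l then τ else τ ^ 2) * Sig j l * (θ j * θ l)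
          = τ ^ 2 * Sig j l * (θ j * θ l) + (if j = l then (τ - τ ^ 2) * θ j ^ 2 else 0) := by
        intro l
        by_cases h : j = l
        · subst h; rw [if_pos rfl, if_pos rfl, hdiag]; ring
        · rw [if_neg h, if_neg h]; ring
      rw [Finset.sum_congr rfl fun l _ => hterm l, Finset.sum_add_distrib,
        Finset.sum_ite_eq Finset.univ j (fun _ => (τ - τ ^ 2) * θ j ^ 2),
        if_pos (Finset.mem_univ j)]
    rw [Finset.sum_congr rfl fun j _ => hj j, Finset.sum_add_distrib]
    congr 1
    rw [← Finset.mul_sum]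
    ring
  rw [hfin]
  ring
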